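/- Let G₀ be a Borel probability measure on ℝ with mean 0 and variance 1 satisfying simultaneous moment control with parameters A₀ > 0 and α ∈ (0,2], i.e. (∫|τ|^p dG₀(τ))^{1/p} ≤ A₀ p^{1/α} for every p > 0. Then for every p > 0 there exists a constant C depending only on p, α, A₀ (and not on ν, z, or G₀) such that for all ν > 0 and all z ∈ ℝ, the posterior p-th absolute moment in the Gaussian location model satisfies ( ∫ |τ|^p φ((z−τ)/ν) dG₀(τ) ) / ( ∫ φ((z−τ)/ν) dG₀(τ) ) ≤ C (|z| ∨ 1)^p. -/

import Mathlib

open MeasureTheory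

/-- The standard normal density `φ(t) = (2π)^{-1/2} exp(−t²/2)`. -/
noncomputable def gaussPdf (t : ℝ) : ℝ := (Real.sqrt (2 * Real.pi))⁻¹ * Real.exp (-(t ^ 2) / 2)

lemma gaussPdf_pos (t : ℝ) : 0 < gaussPdf t := by
  unfold gaussPdf
  have : (0:ℝ) < Real.pi := Real.pi_pos
  positivity

lemma gaussPdf_anti {a b : ℝ} (h : a ^ 2 ≤ b ^ 2) : gaussPdf b ≤ gaussPdf a := by
  unfold gaussPdf
  have h0 : (0:ℝ) < Real.sqrt (2 * Real.pi) :=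
    Real.sqrt_pos.mpr (by positivity)
  have := Real.exp_le_exp.mpr (show -(b ^ 2) / 2 ≤ -(a ^ 2) / 2 by linarith)
  exact mul_le_mul_of_nonneg_left this (by positivity)

lemma gaussPdf_le (t : ℝ) : gaussPdf t ≤ (Real.sqrt (2 * Real.pi))⁻¹ := by
  unfold gaussPdf
  have h0 : (0:ℝ) < Real.sqrt (2 * Real.pi) :=
    Real.sqrt_pos.mpr (by positivity)
  have : Real.exp (-(t ^ 2) / 2) ≤ 1 := Real.exp_le_one_iff.mpr (by nlinarith [sq_nonneg t])
  calc (Real.sqrt (2 * Real.pi))⁻¹ * Real.exp (-(t ^ 2) / 2)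
      ≤ (Real.sqrt (2 * Real.pi))⁻¹ * 1 := by
        exact mul_le_mul_of_nonneg_left this (by positivity)
    _ = (Real.sqrt (2 * Real.pi))⁻¹ := mul_one _

lemma gaussPdf_continuous : Continuous gaussPdf := by
  unfold gaussPdf
  fun_prop

theorem posterior_moment_bound
    (A₀ : ℝ) (hA₀ : 0 < A₀) (α : ℝ) (hα : α ∈ Set.Ioc (0:ℝ) 2)
    (p : ℝ) (hp : 0 < p) :
    ∃ C : ℝ, 0 < C ∧
      ∀ (G₀ : Measure ℝ), IsProbabilityMeasure G₀ →
        (∫ τ, τ ∂G₀) = 0 →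
        (∫ τ, τ ^ 2 ∂G₀) = 1 →
        (∀ q : ℝ, 0 < q →
          (∫⁻ τ, ENNReal.ofReal (|τ| ^ q) ∂G₀) ^ (1 / q)
            ≤ ENNReal.ofReal (A₀ * q ^ (1 / α))) →
        ∀ (ν : ℝ), 0 < ν → ∀ z : ℝ,
          (∫ τ, |τ| ^ p * gaussPdf ((z - τ) / ν) ∂G₀)
              / (∫ τ, gaussPdf ((z - τ) / ν) ∂G₀)
            ≤ C * (|z| ⊔ 1) ^ p := by
  set B : ℝ := A₀ * p ^ (1 / α) with hB
  have hBpos : 0 < B := by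
    have : (0:ℝ) < p ^ (1 / α) := Real.rpow_pos_of_pos hp _
    positivity
  set K : ℝ := B ^ p with hKdef
  have hKpos : 0 < K := Real.rpow_pos_of_pos hBpos _
  refine ⟨(4:ℝ) ^ p + (4/3) * K, by positivity, ?_⟩
  intro G₀ hprob hmean hvar hmom ν hν z
  -- measurability of |τ|^p
  have hmeas_p : Measurable (fun τ : ℝ => |τ| ^ p) :=
    measurable_abs.pow_const p |>.comp measurable_id |>.mono le_rfl le_rfl
  -- bound the p-th moment
  have hLp : (∫⁻ τ, ENNReal.ofReal (|τ| ^ p) ∂G₀) ≤ ENNReal.ofReal B ^ p := by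
    have h := hmom p hp
    have h2 := ENNReal.rpow_le_rpow h hp.le
    rwa [← ENNReal.rpow_mul, one_div, inv_mul_cancel₀ hp.ne', ENNReal.rpow_one] at h2
  -- integrability of |τ|^p
  have hIp : Integrable (fun τ : ℝ => |τ| ^ p) G₀ := by
    refine ⟨hmeas_p.aestronglyMeasurable, ?_⟩
    rw [HasFiniteIntegral]
    have heq : ∀ τ : ℝ, (‖|τ| ^ p‖₊ : ENNReal) = ENNReal.ofReal (|τ| ^ p) := fun τ =>
      (Real.enorm_eq_ofReal (Real.rpow_nonneg (abs_nonneg τ) p)).symm ▸ rfl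
    calc ∫⁻ τ, (‖|τ| ^ p‖₊ : ENNReal) ∂G₀
        = ∫⁻ τ, ENNReal.ofReal (|τ| ^ p) ∂G₀ := by
          refine lintegral_congr fun τ => ?_
          exact Real.enorm_eq_ofReal (Real.rpow_nonneg (abs_nonneg τ) p)
      _ ≤ ENNReal.ofReal B ^ p := hLp
      _ < ⊤ := ENNReal.rpow_lt_top_of_nonneg hp.le ENNReal.ofReal_ne_top
  -- real moment bound
  have hK : (∫ τ, |τ| ^ p ∂G₀) ≤ K := by
    have hnn : 0 ≤ᵐ[G₀] fun τ : ℝ => |τ| ^ p :=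
      Filter.Eventually.of_forall fun τ => Real.rpow_nonneg (abs_nonneg τ) p
    have := ofReal_integral_eq_lintegral_ofReal hIp hnn
    have h2 : ENNReal.ofReal (∫ τ, |τ| ^ p ∂G₀) ≤ ENNReal.ofReal K := by
      rw [this, hKdef, ← ENNReal.ofReal_rpow_of_nonneg hBpos.le hp.le]
      exact hLp
    exact (ENNReal.ofReal_le_ofReal_iff hKpos.le).mp h2
  -- integrability of τ²
  have hI2 : Integrable (fun τ : ℝ => τ ^ 2) G₀ := by
    by_contra h
    rw [integral_undef h] at hvar
    exact one_ne_zero hvar.symm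
  -- Chebyshev: mass of [-2,2]
  set t : Set ℝ := {τ : ℝ | |τ| ≤ 2} with ht
  have htmeas : MeasurableSet t := measurableSet_le measurable_abs measurable_const
  have hcheb : (3/4 : ℝ) ≤ (G₀ t).toReal := by
    have hl2 : (∫⁻ τ, ENNReal.ofReal (τ ^ 2) ∂G₀) = 1 := by
      have hnn : 0 ≤ᵐ[G₀] fun τ : ℝ => τ ^ 2 :=
        Filter.Eventually.of_forall fun τ => sq_nonneg τ
      rw [← ofReal_integral_eq_lintegral_ofReal hI2 hnn, hvar, ENNReal.ofReal_one]
    have hcompl : G₀ tᶜ ≤ 1/4 := by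
      have haem : AEMeasurable (fun τ : ℝ => ENNReal.ofReal (τ ^ 2)) G₀ :=
        (ENNReal.measurable_ofReal.comp ((measurable_id.pow_const 2))).aemeasurable
      have hsub : tᶜ ⊆ {τ : ℝ | (4:ENNReal) ≤ ENNReal.ofReal (τ ^ 2)} := by
        intro τ hτ
        simp only [ht, Set.mem_compl_iff, Set.mem_setOf_eq, not_le] at hτ
        have h4 : (4:ℝ) ≤ τ ^ 2 := by nlinarith [abs_nonneg τ, sq_abs τ]
        simp only [Set.mem_setOf_eq]
        calc (4:ENNReal) = ENNReal.ofReal 4 := by norm_num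
          _ ≤ ENNReal.ofReal (τ ^ 2) := ENNReal.ofReal_le_ofReal h4
      have hmul := mul_meas_ge_le_lintegral₀ haem (4:ENNReal)
      rw [hl2] at hmul
      have h1 : (4:ENNReal) * G₀ tᶜ ≤ 1 :=
        le_trans (mul_le_mul_right (measure_mono hsub) 4) hmul
      have h2 := ENNReal.div_le_div_right h1 4
      rwa [mul_comm, mul_div_assoc, ENNReal.div_self (by norm_num) (by norm_num),
        mul_one] at h2
    have htot : G₀ t + G₀ tᶜ = 1 := by
      rw [measure_add_measure_compl htmeas]; exact measure_univ
    have hge : (3/4 : ENNReal) ≤ G₀ t := by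
      by_contra hlt
      push_neg at hlt
      have hcontra : (1:ENNReal) < 1 := by
        calc (1:ENNReal) = G₀ t + G₀ tᶜ := htot.symm
          _ ≤ G₀ t + 1/4 := add_le_add_right hcompl _
          _ < 3/4 + 1/4 := ENNReal.add_lt_add_right (by norm_num) hlt
          _ = (4:ENNReal)/4 := by rw [ENNReal.div_add_div_same]; norm_num
          _ = 1 := ENNReal.div_self (by norm_num) (by norm_num)
      exact lt_irrefl _ hcontra
    have hfin : G₀ t ≠ ⊤ := measure_ne_top _ _
    calc (3/4 : ℝ) = ((3/4 : ENNReal)).toReal := by norm_num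
      _ ≤ (G₀ t).toReal := ENNReal.toReal_mono hfin hge
  -- constants
  set c : ℝ := (Real.sqrt (2 * Real.pi))⁻¹ with hc
  have hcpos : 0 < c := by
    rw [hc]; exact inv_pos.mpr (Real.sqrt_pos.mpr (by positivity))
  set D : ℝ := |z| + 2 with hD
  have hDpos : 0 < D := by positivity
  set E : ℝ := Real.exp (-((D / ν) ^ 2) / 2) with hE
  have hEpos : 0 < E := Real.exp_pos _
  have hgDE : gaussPdf (D / ν) = c * E := rfl
  set M : ℝ := 2 * |z| + 2 with hM
  have hMpos : 0 < M := by positivity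
  set g : ℝ → ℝ := fun τ => gaussPdf ((z - τ) / ν) with hgdef
  have hgpos : ∀ τ, 0 < g τ := fun τ => gaussPdf_pos _
  have hgle : ∀ τ, g τ ≤ c := fun τ => gaussPdf_le _
  have hgcont : Continuous g := gaussPdf_continuous.comp (by fun_prop)
  have hgmeas : Measurable g := hgcont.measurable
  have hgInt : Integrable g G₀ := by
    refine Integrable.mono' (integrable_const c) hgcont.aestronglyMeasurable ?_
    exact Filter.Eventually.of_forall fun τ => by
      rw [Real.norm_eq_abs, abs_of_pos (hgpos τ)]; exact hgle τ
  -- lower bound on g on t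
  have hglow : ∀ τ ∈ t, c * E ≤ g τ := by
    intro τ hτ
    rw [ht, Set.mem_setOf_eq] at hτ
    rw [← hgDE]
    apply gaussPdf_anti
    have habs : |z - τ| ≤ D := by
      calc |z - τ| = |z + (-τ)| := by ring_nf
        _ ≤ |z| + |(-τ)| := abs_add_le _ _
        _ = |z| + |τ| := by rw [abs_neg]
        _ ≤ D := by rw [hD]; linarith
    have hsq : (z - τ) ^ 2 ≤ D ^ 2 := by
      nlinarith [abs_nonneg (z - τ), sq_abs (z - τ)]
    rw [div_pow, div_pow]
    gcongr
  -- upper bound on g off s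
  have hghigh : ∀ τ : ℝ, M < |τ| → g τ ≤ c * E := by
    intro τ hτ
    rw [← hgDE]
    apply gaussPdf_anti
    have habs : D ≤ |z - τ| := by
      have h1 : |τ| - |z| ≤ |τ - z| := abs_sub_abs_le_abs_sub τ z
      have h2 : |τ - z| = |z - τ| := abs_sub_comm τ z
      rw [hD]; rw [h2] at h1; rw [hM] at hτ; linarith
    have hsq : D ^ 2 ≤ (z - τ) ^ 2 := by
      nlinarith [abs_nonneg (z - τ), sq_abs (z - τ)]
    rw [div_pow, div_pow]
    gcongr
  -- denominator lower bound
  set dInt : ℝ := ∫ τ, g τ ∂G₀ with hdInt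
  have hden : (3/4 : ℝ) * (c * E) ≤ dInt := by
    calc (3/4 : ℝ) * (c * E) ≤ (G₀ t).toReal * (c * E) :=
          mul_le_mul_of_nonneg_right hcheb (by positivity)
      _ = ∫ _τ in t, (c * E) ∂G₀ := by rw [setIntegral_const, smul_eq_mul]; rfl
      _ ≤ ∫ τ in t, g τ ∂G₀ := by
          refine setIntegral_mono_on (integrableOn_const (measure_ne_top _ _))
            hgInt.integrableOn htmeas hglow
      _ ≤ dInt := setIntegral_le_integral hgInt
          (Filter.Eventually.of_forall fun τ => (hgpos τ).le)
  have hdpos : 0 < dInt := lt_of_lt_of_le (by positivity) hden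
  -- numerator
  set f : ℝ → ℝ := fun τ => |τ| ^ p * g τ with hfdef
  have hfnn : ∀ τ, 0 ≤ f τ := fun τ =>
    mul_nonneg (Real.rpow_nonneg (abs_nonneg τ) p) (hgpos τ).le
  have hfInt : Integrable f G₀ := by
    refine Integrable.mono' (hIp.const_mul c) ((hmeas_p.mul hgmeas).aestronglyMeasurable) ?_
    refine Filter.Eventually.of_forall fun τ => ?_
    rw [Real.norm_eq_abs, abs_of_nonneg (hfnn τ)]
    calc |τ| ^ p * g τ ≤ |τ| ^ p * c :=
          mul_le_mul_of_nonneg_left (hgle τ) (Real.rpow_nonneg (abs_nonneg τ) p)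
      _ = c * |τ| ^ p := mul_comm _ _
  set s : Set ℝ := {τ : ℝ | |τ| ≤ M} with hs
  have hsmeas : MeasurableSet s := measurableSet_le measurable_abs measurable_const
  have hsplit : (∫ τ, f τ ∂G₀) = (∫ τ in s, f τ ∂G₀) + ∫ τ in sᶜ, f τ ∂G₀ :=
    (integral_add_compl hsmeas hfInt).symm
  have hbound1 : (∫ τ in s, f τ ∂G₀) ≤ M ^ p * dInt := by
    calc (∫ τ in s, f τ ∂G₀) ≤ ∫ τ in s, M ^ p * g τ ∂G₀ := by
          refine setIntegral_mono_on hfInt.integrableOn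
            (hgInt.const_mul _).integrableOn hsmeas fun τ hτ => ?_
          rw [hs, Set.mem_setOf_eq] at hτ
          exact mul_le_mul_of_nonneg_right
            (Real.rpow_le_rpow (abs_nonneg τ) hτ hp.le) (hgpos τ).le
      _ ≤ ∫ τ, M ^ p * g τ ∂G₀ := setIntegral_le_integral (hgInt.const_mul _)
          (Filter.Eventually.of_forall fun τ => mul_nonneg (by positivity) (hgpos τ).le)
      _ = M ^ p * dInt := integral_const_mul _ _
  have hbound2 : (∫ τ in sᶜ, f τ ∂G₀) ≤ (c * E) * K := by
    calc (∫ τ in sᶜ, f τ ∂G₀) ≤ ∫ τ in sᶜ, |τ| ^ p * (c * E) ∂G₀ := by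
          refine setIntegral_mono_on hfInt.integrableOn
            (hIp.mul_const _).integrableOn hsmeas.compl fun τ hτ => ?_
          rw [hs] at hτ
          simp only [Set.mem_compl_iff, Set.mem_setOf_eq, not_le] at hτ
          exact mul_le_mul_of_nonneg_left (hghigh τ hτ)
            (Real.rpow_nonneg (abs_nonneg τ) p)
      _ ≤ ∫ τ, |τ| ^ p * (c * E) ∂G₀ := setIntegral_le_integral (hIp.mul_const _)
          (Filter.Eventually.of_forall fun τ =>
            mul_nonneg (Real.rpow_nonneg (abs_nonneg τ) p) (by positivity))
      _ = (∫ τ, |τ| ^ p ∂G₀) * (c * E) := integral_mul_const _ _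
      _ ≤ K * (c * E) := mul_le_mul_of_nonneg_right hK (by positivity)
      _ = (c * E) * K := mul_comm _ _
  -- combine
  have hcE : c * E ≤ (4/3) * dInt := by linarith
  have hnum : (∫ τ, f τ ∂G₀) ≤ (M ^ p + (4/3) * K) * dInt := by
    have h2 : (c * E) * K ≤ ((4/3) * dInt) * K :=
      mul_le_mul_of_nonneg_right hcE hKpos.le
    calc (∫ τ, f τ ∂G₀) = (∫ τ in s, f τ ∂G₀) + ∫ τ in sᶜ, f τ ∂G₀ := hsplit
      _ ≤ M ^ p * dInt + (c * E) * K := add_le_add hbound1 hbound2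
      _ ≤ M ^ p * dInt + ((4/3) * dInt) * K := by linarith
      _ = (M ^ p + (4/3) * K) * dInt := by ring
  rw [div_le_iff₀ hdpos]
  have hm1 : (1:ℝ) ≤ |z| ⊔ 1 := le_max_right _ _
  have hzle : |z| ≤ |z| ⊔ 1 := le_max_left _ _
  have hMle : M ≤ 4 * (|z| ⊔ 1) := by rw [hM]; linarith
  have hMp : M ^ p ≤ 4 ^ p * (|z| ⊔ 1) ^ p := by
    calc M ^ p ≤ (4 * (|z| ⊔ 1)) ^ p := Real.rpow_le_rpow hMpos.le hMle hp.le
      _ = 4 ^ p * (|z| ⊔ 1) ^ p := Real.mul_rpow (by norm_num) (by positivity)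
  have hone : (1:ℝ) ≤ (|z| ⊔ 1) ^ p := by
    calc (1:ℝ) = 1 ^ p := (Real.one_rpow p).symm
      _ ≤ (|z| ⊔ 1) ^ p := Real.rpow_le_rpow (by norm_num) hm1 hp.le
  have hCfinal : M ^ p + (4/3) * K ≤ ((4:ℝ) ^ p + (4/3) * K) * (|z| ⊔ 1) ^ p := by
    have h3 : (4/3) * K ≤ (4/3) * K * (|z| ⊔ 1) ^ p :=
      le_mul_of_one_le_right (by positivity) hone
    calc M ^ p + (4/3) * K ≤ 4 ^ p * (|z| ⊔ 1) ^ p + (4/3) * K * (|z| ⊔ 1) ^ p := by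
          linarith
      _ = ((4:ℝ) ^ p + (4/3) * K) * (|z| ⊔ 1) ^ p := by ring
  calc (∫ τ, f τ ∂G₀) ≤ (M ^ p + (4/3) * K) * dInt := hnum
    _ ≤ (((4:ℝ) ^ p + (4/3) * K) * (|z| ⊔ 1) ^ p) * dInt :=
        mul_le_mul_of_nonneg_right hCfinal hdpos.le
    _ = ((4:ℝ) ^ p + (4/3) * K) * (|z| ⊔ 1) ^ p * dInt := rfl
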